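/- arXiv:1107.4553 — 3 statements merged into one kernel-verified Lean document; each statement's English description precedes it below -/
import Mathlib

section
/- Let H be a transitive elementary Abelian p-group on a finite set O, and process a list of generators u₁,…,u_m of H as follows: maintain a list 𝐡 (initially empty) and the orbit partition Q of ⟨𝐡⟩ (initially the discrete partition); for a fixed base point a ∈ O, add u_i to 𝐡 (and replace Q by orbp(⟨u_i⟩) ⊔ Q) exactly when a^{u_i} is not in the block of a in Q. Then the resulting list 𝐡 is an F_p-basis of H. -/
attribute [local instance] Classical.propDecidable

/-- The greedy basis-building procedure `B`: process the list of generators,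
keeping a generator `u` exactly when `a^u` does not lie in the orbit of the
base point `a` under the group generated by the generators kept so far
(that orbit is the block of `a` in the orbit partition `Q`). -/
noncomputable def buildBasis {O : Type*} (a : O) :
    List (Equiv.Perm O) → List (Equiv.Perm O) → List (Equiv.Perm O)
  | [], h => h
  | u :: l, h =>
    if u a ∈ MulAction.orbit ↥(Subgroup.closure {x | x ∈ h}) a then
      buildBasis a l h
    else
      buildBasis a l (u :: h)

/-- A list where each entry is not in the subgroup generated by the later entries. -/
inductive GoodList {O : Type*} : List (Equiv.Perm O) → Prop
  | nil : GoodList []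
  | cons {g : Equiv.Perm O} {t : List (Equiv.Perm O)} :
      g ∉ Subgroup.closure {x | x ∈ t} → GoodList t → GoodList (g :: t)

theorem regular_aux {O : Type*} (a : O) (H : Subgroup (Equiv.Perm O))
    (hcomm : ∀ u ∈ H, ∀ v ∈ H, u * v = v * u)
    (htrans : MulAction.IsPretransitive ↥H O) :
    ∀ u ∈ H, ∀ v ∈ H, u a = v a → u = v := by
  have key : ∀ s ∈ H, s a = a → s = 1 := by
    intro s hs hsa
    ext b
    obtain ⟨t, ht⟩ := htrans.exists_smul_eq a b
    have ht' : (t : Equiv.Perm O) a = b := ht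
    have hc := hcomm s hs t t.2
    calc s b = s ((t : Equiv.Perm O) a) := by rw [ht']
      _ = (s * (t : Equiv.Perm O)) a := rfl
      _ = ((t : Equiv.Perm O) * s) a := by rw [hc]
      _ = (t : Equiv.Perm O) (s a) := rfl
      _ = b := by rw [hsa, ht']
  intro u hu v hv hab
  have h1 : (v⁻¹ * u) = 1 := by
    apply key _ (mul_mem (inv_mem hv) hu)
    show v⁻¹ (u a) = a
    rw [hab]
    exact v.symm_apply_apply a
  have := inv_mul_eq_one.mp h1
  exact this.symm

theorem closure_list_append {O : Type*} (A B : List (Equiv.Perm O)) :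
    Subgroup.closure {x : Equiv.Perm O | x ∈ A ++ B}
      = Subgroup.closure {x | x ∈ A} ⊔ Subgroup.closure {x | x ∈ B} := by
  have : {x : Equiv.Perm O | x ∈ A ++ B} = {x | x ∈ A} ∪ {x | x ∈ B} := by
    ext x; simp
  rw [this, Subgroup.closure_union]

theorem buildBasis_spec {O : Type*} (a : O) (H : Subgroup (Equiv.Perm O))
    (hreg : ∀ u ∈ H, ∀ v ∈ H, u a = v a → u = v) :
    ∀ (rem h : List (Equiv.Perm O)), (∀ x ∈ rem, x ∈ H) → (∀ x ∈ h, x ∈ H) →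
      GoodList h →
      (∀ x ∈ buildBasis a rem h, x ∈ H) ∧ GoodList (buildBasis a rem h) ∧
      Subgroup.closure {x | x ∈ buildBasis a rem h} =
        Subgroup.closure {x | x ∈ rem ++ h} := by
  intro rem
  induction rem with
  | nil =>
    intro h _ hh hgood
    exact ⟨hh, hgood, rfl⟩
  | cons u rem ih =>
    intro h hrem hh hgood
    have hu : u ∈ H := hrem u (List.mem_cons_self)
    have hrem' : ∀ x ∈ rem, x ∈ H := fun x hx => hrem x (List.mem_cons_of_mem _ hx)
    by_cases hcond : u a ∈ MulAction.orbit ↥(Subgroup.closure {x | x ∈ h}) a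
    · -- u is discarded; u ∈ closure h
      have hbb : buildBasis a (u :: rem) h = buildBasis a rem h := by
        rw [buildBasis, if_pos hcond]
      obtain ⟨k, hk⟩ := MulAction.mem_orbit_iff.mp hcond
      have hk' : (k : Equiv.Perm O) a = u a := hk
      have hkH : (k : Equiv.Perm O) ∈ H := by
        have : Subgroup.closure {x | x ∈ h} ≤ H := (Subgroup.closure_le H).mpr hh
        exact this k.2
      have hueq : (k : Equiv.Perm O) = u := hreg _ hkH _ hu hk'
      have humem : u ∈ Subgroup.closure {x : Equiv.Perm O | x ∈ h} := hueq ▸ k.2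
      obtain ⟨h1, h2, h3⟩ := ih h hrem' hh hgood
      refine ⟨by rwa [hbb], by rwa [hbb], ?_⟩
      rw [hbb, h3]
      -- closure (rem ++ h) = closure ((u :: rem) ++ h)
      have hset : {x : Equiv.Perm O | x ∈ (u :: rem) ++ h}
          = insert u {x | x ∈ rem ++ h} := by ext x; simp
      rw [hset]
      apply le_antisymm
      · exact Subgroup.closure_mono (Set.subset_insert _ _)
      · apply (Subgroup.closure_le _).mpr
        intro x hx
        rcases hx with rfl | hx
        · have hle : Subgroup.closure {x : Equiv.Perm O | x ∈ h}
              ≤ Subgroup.closure {x | x ∈ rem ++ h} := by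
            apply Subgroup.closure_mono
            intro y hy
            simp only [Set.mem_setOf_eq, List.mem_append] at *
            exact Or.inr hy
          exact hle humem
        · exact Subgroup.subset_closure hx
    · -- u is kept
      have hbb : buildBasis a (u :: rem) h = buildBasis a rem (u :: h) := by
        rw [buildBasis, if_neg hcond]
      have hunot : u ∉ Subgroup.closure {x : Equiv.Perm O | x ∈ h} := by
        intro humem
        exact hcond ⟨⟨u, humem⟩, rfl⟩
      have hh' : ∀ x ∈ u :: h, x ∈ H := by
        intro x hx
        rcases List.mem_cons.mp hx with rfl | hx
        · exact hu
        · exact hh x hx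
      obtain ⟨h1, h2, h3⟩ := ih (u :: h) hrem' hh' (GoodList.cons hunot hgood)
      refine ⟨by rwa [hbb], by rwa [hbb], ?_⟩
      rw [hbb, h3]
      have hset : {x : Equiv.Perm O | x ∈ rem ++ u :: h}
          = {x | x ∈ (u :: rem) ++ h} := by
        ext x; simp; tauto
      rw [hset]

theorem indep_of_good {O : Type*} (p : ℕ) (hp : p.Prime)
    (L : List (Equiv.Perm O)) (hL : GoodList L)
    (hpow : ∀ g ∈ L, g ^ p = 1) :
    ∀ c : Fin L.length → ZMod p,
      (List.ofFn fun i => (L.get i) ^ (c i).val).prod = 1 → ∀ i, c i = 0 := by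
  haveI : Fact p.Prime := ⟨hp⟩
  revert hL hpow
  induction L with
  | nil => intro _ _ c _ i; exact i.elim0
  | cons g t ih =>
    intro hL hpow c hprod i
    cases hL with
    | cons hg hgt =>
      have hpowt : ∀ x ∈ t, x ^ p = 1 := fun x hx => hpow x (List.mem_cons_of_mem _ hx)
      rw [List.ofFn_succ, List.prod_cons] at hprod
      simp only [List.get_cons_succ, List.get_cons_zero] at hprod
      set s := (List.ofFn fun i : Fin t.length =>
        (t.get i) ^ (c i.succ).val).prod with hs
      have hsmem : s ∈ Subgroup.closure {x : Equiv.Perm O | x ∈ t} := by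
        apply Subgroup.list_prod_mem
        intro x hx
        rw [List.mem_ofFn] at hx
        obtain ⟨j, rfl⟩ := hx
        exact pow_mem (Subgroup.subset_closure (show t.get j ∈ {x : Equiv.Perm O | x ∈ t} from t.get_mem j)) _
      have hgp : g ^ p = 1 := hpow g (List.mem_cons_self)
      have hc0 : c (0 : Fin (t.length + 1)) = 0 := by
        by_contra hc
        have heq : g ^ (c (0 : Fin (t.length + 1))).val = s⁻¹ :=
          eq_inv_of_mul_eq_one_left hprod
        have hgv : g ^ (c (0 : Fin (t.length + 1))).val ∈
            Subgroup.closure {x : Equiv.Perm O | x ∈ t} := by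
          rw [heq]; exact inv_mem hsmem
        set v := (c (0 : Fin (t.length + 1))).val with hv
        set w := (((c (0 : Fin (t.length + 1)))⁻¹ : ZMod p)).val with hw
        have hcast : ((v * w : ℕ) : ZMod p) = 1 := by
          push_cast [hv, hw, ZMod.natCast_val, ZMod.cast_id]
          exact mul_inv_cancel₀ hc
        have hmod : (v * w) % p = 1 := by
          obtain ⟨k, hk⟩ := (ZMod.natCast_eq_iff p (v * w) 1).mp hcast
          have hp2 := hp.two_le
          rw [ZMod.val_one_eq_one_mod, Nat.mod_eq_of_lt (by omega)] at hk
          rw [hk, Nat.add_mul_mod_self_left, Nat.mod_eq_of_lt (by omega)]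
        have hgvw : g ^ (v * w) = g := by
          conv_lhs => rw [← Nat.div_add_mod (v * w) p]
          rw [pow_add, pow_mul, hgp, one_pow, one_mul, hmod, pow_one]
        have : g ∈ Subgroup.closure {x : Equiv.Perm O | x ∈ t} := by
          rw [← hgvw, pow_mul]
          exact pow_mem hgv w
        exact hg this
      refine Fin.cases ?_ ?_ i
      · exact hc0
      · intro j
        have hval0 : (c (0 : Fin (t.length + 1))).val = 0 := by
          rw [hc0, ZMod.val_zero]
        rw [hval0, pow_zero, one_mul] at hprod
        exact ih hgt hpowt (fun i => c i.succ) hprod j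

/-- If `H = ⟨u₁,…,u_m⟩` is a transitive elementary Abelian `p`-group on a
finite set `O` and `a ∈ O`, then the list produced by the greedy procedure
(started with the empty list, i.e. the discrete orbit partition) is an
`F_p`-basis of `H`: it generates `H` and is linearly independent over `F_p`
(no nontrivial product `∏ hᵢ^{cᵢ}` with `cᵢ ∈ F_p` is the identity). -/
theorem buildBasis_is_basis (p : ℕ) (hp : p.Prime) (O : Type*) [Fintype O]
    (l : List (Equiv.Perm O))
    (hcomm : ∀ u ∈ Subgroup.closure {x | x ∈ l}, ∀ v ∈ Subgroup.closure {x | x ∈ l},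
      u * v = v * u)
    (horder : ∀ u ∈ Subgroup.closure {x | x ∈ l}, u ≠ 1 → orderOf u = p)
    (htrans : MulAction.IsPretransitive ↥(Subgroup.closure {x | x ∈ l}) O)
    (a : O) :
    Subgroup.closure {x | x ∈ buildBasis a l []} = Subgroup.closure {x | x ∈ l} ∧
    ∀ c : Fin (buildBasis a l []).length → ZMod p,
      (List.ofFn fun i => ((buildBasis a l []).get i) ^ (c i).val).prod = 1 → ∀ i, c i = 0 := by
  set H := Subgroup.closure {x : Equiv.Perm O | x ∈ l} with hH
  have hreg := regular_aux a H hcomm htrans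
  obtain ⟨h1, h2, h3⟩ := buildBasis_spec a H hreg l []
    (fun x hx => Subgroup.subset_closure hx) (fun x hx => absurd hx (List.not_mem_nil))
    GoodList.nil
  have hgen : Subgroup.closure {x | x ∈ buildBasis a l []} = H := by
    rw [h3, List.append_nil]
  refine ⟨hgen, ?_⟩
  apply indep_of_good p hp _ h2
  intro g hg
  by_cases hg1 : g = 1
  · rw [hg1, one_pow]
  · rw [← horder g (h1 g hg) hg1]
    exact pow_orderOf_eq_one g
end

section
/- Let Σ be a finite set, p a prime, and S a finite set of subsets (clauses) of Σ. Define A_S as the disjoint union over C ∈ S of the function sets F_p^C, and the group morphism f: F_p^Σ → Sym(A_S) by w^{f(u)} = w + u|_C for w ∈ F_p^C. Let G_S = ⟨ f(δ_α) : α ∈ Σ ⟩, where δ_α is the indicator function of α, and define the constraint C_S(w) = { w + δ_α|_C : α ∈ C } for w ∈ F_p^C. Then there exists an interpretation I ⊆ Σ with |C ∩ I| = 1 for every C ∈ S if and only if some g ∈ G_S satisfies w^g ∈ C_S(w) for all w ∈ A_S. -/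
variable {Sig : Type*} [DecidableEq Sig]

/-- The set `A_S`: the disjoint union over clauses `C ∈ S` of the function
spaces `F_p^C`. -/
def ClauseSpace (p : ℕ) (S : Finset (Finset Sig)) : Type _ :=
  Σ C : {C // C ∈ S}, ({x // x ∈ C.1} → ZMod p)

/-- The morphism `f : F_p^Σ → Sym(A_S)`, `w^{f(u)} = w + u|_C` on each fiber. -/
def clausePerm (p : ℕ) (S : Finset (Finset Sig)) (u : Sig → ZMod p) :
    Equiv.Perm (ClauseSpace p S) :=
  Equiv.sigmaCongrRight fun C => Equiv.addRight fun x : {x // x ∈ C.1} => u x.1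

/-- The indicator function `δ_α` of a variable `α`. -/
def indicator (p : ℕ) (α : Sig) : Sig → ZMod p := fun β => if β = α then 1 else 0

lemma clausePerm_apply (p : ℕ) (S : Finset (Finset Sig)) (u : Sig → ZMod p)
    (a : ClauseSpace p S) :
    clausePerm p S u a = ⟨a.1, a.2 + fun x => u x.1⟩ := rfl

lemma clausePerm_zero (p : ℕ) (S : Finset (Finset Sig)) :
    clausePerm p S 0 = 1 := by
  apply Equiv.ext
  rintro ⟨C, w⟩
  show (⟨C, w + fun _ => (0 : ZMod p)⟩ : ClauseSpace p S) = ⟨C, w⟩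
  congr 1
  funext x
  simp

lemma clausePerm_add (p : ℕ) (S : Finset (Finset Sig)) (u v : Sig → ZMod p) :
    clausePerm p S (u + v) = clausePerm p S u * clausePerm p S v := by
  apply Equiv.ext
  rintro ⟨C, w⟩
  show (⟨C, w + fun x => (u + v) x.1⟩ : ClauseSpace p S) = ⟨C, (w + fun x => v x.1) + fun x => u x.1⟩
  congr 1
  funext x
  simp [Pi.add_apply]
  ring

/-- The range of `clausePerm` as a subgroup. -/
def clausePermRange (p : ℕ) (S : Finset (Finset Sig)) :
    Subgroup (Equiv.Perm (ClauseSpace p S)) where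
  carrier := Set.range (clausePerm p S)
  one_mem' := ⟨0, clausePerm_zero p S⟩
  mul_mem' := by
    rintro _ _ ⟨u, rfl⟩ ⟨v, rfl⟩
    exact ⟨u + v, clausePerm_add p S u v⟩
  inv_mem' := by
    rintro _ ⟨u, rfl⟩
    refine ⟨-u, eq_inv_of_mul_eq_one_left ?_⟩
    rw [← clausePerm_add, neg_add_cancel, clausePerm_zero]

/-- `S` is 1-satisfiable (some `I ⊆ Σ` meets every clause in exactly one
element) iff some `g` in the group `G_S = ⟨f(δ_α) : α ∈ Σ⟩` satisfies the
constraint `w^g ∈ C_S(w) = { w + δ_α|_C : α ∈ C }` for all `w ∈ A_S`. -/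
theorem one_sat_iff_constraint (p : ℕ) (hp : p.Prime) [Fintype Sig]
    (S : Finset (Finset Sig)) :
    (∃ I : Finset Sig, ∀ C ∈ S, (C ∩ I).card = 1) ↔
    (∃ g ∈ Subgroup.closure (Set.range fun α : Sig => clausePerm p S (indicator p α)),
      ∀ a : ClauseSpace p S,
        ∃ α ∈ a.1.1, g a = ⟨a.1, a.2 + fun x => indicator p α x.1⟩) := by
  haveI : Fact p.Prime := ⟨hp⟩
  constructor
  · rintro ⟨I, hI⟩
    refine ⟨clausePerm p S (∑ α ∈ I, indicator p α), ?_, ?_⟩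
    · classical
      clear hI
      induction I using Finset.induction with
      | empty => simp [clausePerm_zero]
      | @insert x s hx ih =>
        rw [Finset.sum_insert hx, clausePerm_add]
        exact Subgroup.mul_mem _ (Subgroup.subset_closure ⟨_, rfl⟩) ih
    · rintro ⟨⟨C, hC⟩, w⟩
      obtain ⟨α, hα⟩ := Finset.card_eq_one.mp (hI C hC)
      have hαC : α ∈ C := (Finset.mem_inter.mp (hα ▸ Finset.mem_singleton_self α)).1
      refine ⟨α, hαC, ?_⟩
      erw [clausePerm_apply]
      congr 1
      funext x
      have hxC : x.1 ∈ C := x.2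
      have : (∑ β ∈ I, indicator p β) x.1 = indicator p α x.1 := by
        simp only [Finset.sum_apply, indicator]
        rw [Finset.sum_ite_eq I x.1 (fun _ => (1 : ZMod p))]
        by_cases h : x.1 = α
        · subst h
          have : x.1 ∈ I := (Finset.mem_inter.mp (hα ▸ Finset.mem_singleton_self x.1)).2
          simp [this]
        · have : x.1 ∉ I := by
            intro hmem
            have : x.1 ∈ C ∩ I := Finset.mem_inter.mpr ⟨hxC, hmem⟩
            rw [hα, Finset.mem_singleton] at this
            exact h this
          simp [this, h]
      show w x + (∑ β ∈ I, indicator p β) x.1 = w x + indicator p α x.1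
      rw [this]
  · rintro ⟨g, hg, h⟩
    have : g ∈ clausePermRange p S := by
      refine Subgroup.closure_le (clausePermRange p S) |>.mpr ?_ hg
      rintro _ ⟨α, rfl⟩
      exact ⟨indicator p α, rfl⟩
    obtain ⟨u, rfl⟩ := this
    classical
    refine ⟨Finset.univ.filter (fun α => u α ≠ 0), fun C hC => ?_⟩
    obtain ⟨α, hαC, heq⟩ := h ⟨⟨C, hC⟩, 0⟩
    erw [clausePerm_apply] at heq
    have hfun : (fun x : {x // x ∈ C} => u x.1) = fun x => indicator p α x.1 := by
      have := (Sigma.mk.inj_iff.mp heq).2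
      have := eq_of_heq this
      simpa using this
    rw [Finset.card_eq_one]
    refine ⟨α, ?_⟩
    ext x
    simp only [Finset.mem_inter, Finset.mem_filter, Finset.mem_univ, true_and,
      Finset.mem_singleton]
    constructor
    · rintro ⟨hxC, hxu⟩
      have := congrFun hfun ⟨x, hxC⟩
      simp only at this
      rw [this] at hxu
      simp only [indicator] at hxu
      by_contra hne
      simp [hne] at hxu
    · rintro rfl
      refine ⟨hαC, ?_⟩
      have := congrFun hfun ⟨x, hαC⟩
      simp only at this
      rw [this]
      simp [indicator]
end

section
/- Let Σ be a finite set, p a prime, S a finite set of subsets of Σ each of cardinality at most p. Define A'_S = (Σ × F_p) ⊎ (S × F_p) and the homomorphism f': F_p^Σ → Sym(A'_S) by ⟨α, x⟩^{f'(u)} = ⟨α, x + u(α)⟩ and ⟨C, y⟩^{f'(u)} = ⟨C, y + Σ_{β∈C} u(β)⟩. Let G'_S = ⟨ f'(δ_α) : α ∈ Σ ⟩ and define the constraint C'_S by C'_S(⟨α,x⟩) = {⟨α,x⟩, ⟨α,x+1⟩} and C'_S(⟨C,y⟩) = {⟨C,y+1⟩}. Then S is 1-satisfiable if and only if some g ∈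 G'_S satisfies a^g ∈ C'_S(a) for all a ∈ A'_S. -/
variable {Sig : Type*} [DecidableEq Sig]

/-- The set `A'_S = (Σ × F_p) ⊎ (S × F_p)`. -/
def VarClauseSpace (p : ℕ) (S : Finset (Finset Sig)) : Type _ :=
  (Sig × ZMod p) ⊕ ({C // C ∈ S} × ZMod p)

/-- The map `f' : F_p^Σ → Sym(A'_S)`:
`⟨α,x⟩ ↦ ⟨α, x + u(α)⟩` and `⟨C,y⟩ ↦ ⟨C, y + Σ_{β∈C} u(β)⟩`. -/
def varClausePerm (p : ℕ) (S : Finset (Finset Sig)) (u : Sig → ZMod p) :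
    Equiv.Perm (VarClauseSpace p S) :=
  Equiv.sumCongr
    (Equiv.prodCongrRight fun α => Equiv.addRight (u α))
    (Equiv.prodCongrRight fun C : {C // C ∈ S} => Equiv.addRight (∑ β ∈ C.1, u β))

/-- The constraint `C'_S`: `C'_S⟨α,x⟩ = {⟨α,x⟩, ⟨α,x+1⟩}` and
`C'_S⟨C,y⟩ = {⟨C,y+1⟩}`. -/
def varClauseConstraint (p : ℕ) (S : Finset (Finset Sig)) :
    VarClauseSpace p S → Set (VarClauseSpace p S)
  | Sum.inl (α, x) => {Sum.inl (α, x), Sum.inl (α, x + 1)}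
  | Sum.inr (C, y) => {Sum.inr (C, y + 1)}

set_option linter.unusedSectionVars false in
lemma varClausePerm_apply_inl (p : ℕ) (S : Finset (Finset Sig)) (u : Sig → ZMod p)
    (α : Sig) (x : ZMod p) :
    varClausePerm p S u (Sum.inl (α, x)) = Sum.inl (α, x + u α) := rfl

set_option linter.unusedSectionVars false in
lemma varClausePerm_apply_inr (p : ℕ) (S : Finset (Finset Sig)) (u : Sig → ZMod p)
    (C : {C // C ∈ S}) (y : ZMod p) :
    varClausePerm p S u (Sum.inr (C, y)) = Sum.inr (C, y + ∑ β ∈ C.1, u β) := rfl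

set_option linter.unusedSectionVars false in
lemma varClausePerm_mul (p : ℕ) (S : Finset (Finset Sig)) (u v : Sig → ZMod p) :
    varClausePerm p S u * varClausePerm p S v = varClausePerm p S (u + v) := by
  ext a
  cases a with
  | inl x =>
    show varClausePerm p S u (varClausePerm p S v (Sum.inl x)) = _
    obtain ⟨α, y⟩ := x
    simp only [varClausePerm_apply_inl, Pi.add_apply, Sum.inl.injEq, Prod.mk.injEq,
      true_and]
    ring_nf
    rfl
  | inr x =>
    show varClausePerm p S u (varClausePerm p S v (Sum.inr x)) = _
    obtain ⟨C, y⟩ := x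
    simp only [varClausePerm_apply_inr, Pi.add_apply, Finset.sum_add_distrib,
      Sum.inr.injEq, Prod.mk.injEq, true_and]
    ring_nf
    rfl

set_option linter.unusedSectionVars false in
lemma varClausePerm_zero (p : ℕ) (S : Finset (Finset Sig)) :
    varClausePerm p S 0 = 1 := by
  ext a
  cases a with
  | inl x => obtain ⟨α, y⟩ := x; simp [varClausePerm_apply_inl]; rfl
  | inr x => obtain ⟨C, y⟩ := x; simp [varClausePerm_apply_inr]; rfl

set_option linter.unusedSectionVars false in
lemma varClausePerm_nsmul (p : ℕ) (S : Finset (Finset Sig)) (u : Sig → ZMod p) (n : ℕ) :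
    varClausePerm p S (n • u) = (varClausePerm p S u) ^ n := by
  induction n with
  | zero => simpa using varClausePerm_zero p S
  | succ n ih => rw [succ_nsmul, pow_succ, ← ih, varClausePerm_mul]

set_option linter.unusedSectionVars false in
lemma varClausePerm_inv (p : ℕ) (S : Finset (Finset Sig)) (u : Sig → ZMod p) :
    (varClausePerm p S u)⁻¹ = varClausePerm p S (-u) := by
  apply inv_eq_of_mul_eq_one_right
  rw [varClausePerm_mul, add_neg_cancel, varClausePerm_zero]

lemma varClausePerm_mem (p : ℕ) [NeZero p] (S : Finset (Finset Sig)) [Fintype Sig]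
    (u : Sig → ZMod p) :
    varClausePerm p S u ∈ Subgroup.closure
      (Set.range fun α : Sig => varClausePerm p S (indicator p α)) := by
  have hu : u = ∑ α : Sig, (u α).val • indicator p α := by
    funext β
    simp only [Finset.sum_apply, indicator, Pi.smul_apply, smul_eq_mul]
    rw [Finset.sum_eq_single β]
    · simp [ZMod.natCast_val, ZMod.cast_id]
    · intro b _ hb; simp [Ne.symm hb]
    · simp
  rw [hu]
  classical
  induction (Finset.univ : Finset Sig) using Finset.induction with
  | empty =>
    rw [Finset.sum_empty, varClausePerm_zero]
    exact Subgroup.one_mem _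
  | insert _ _ hα ih =>
    rw [Finset.sum_insert hα, ← varClausePerm_mul]
    exact Subgroup.mul_mem _
      (by rw [varClausePerm_nsmul]
          exact Subgroup.pow_mem _ (Subgroup.subset_closure (Set.mem_range_self _)) _) ih

/-- Let `S` be a finite set of clauses over `Σ`, each of cardinality at most
`p`. Then `S` is 1-satisfiable iff some `g` in `G'_S = ⟨f'(δ_α) : α ∈ Σ⟩`
satisfies `a^g ∈ C'_S(a)` for all `a ∈ A'_S`. -/
theorem one_sat_iff_two_constraint (p : ℕ) (hp : p.Prime) [Fintype Sig]
    (S : Finset (Finset Sig)) (hcard : ∀ C ∈ S, C.card ≤ p) :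
    (∃ I : Finset Sig, ∀ C ∈ S, (C ∩ I).card = 1) ↔
    (∃ g ∈ Subgroup.closure
        (Set.range fun α : Sig => varClausePerm p S (indicator p α)),
      ∀ a : VarClauseSpace p S, g a ∈ varClauseConstraint p S a) := by
  haveI : NeZero p := ⟨hp.ne_zero⟩
  haveI : Fact (1 < p) := ⟨hp.one_lt⟩
  constructor
  · rintro ⟨I, hI⟩
    refine ⟨varClausePerm p S (fun β => if β ∈ I then 1 else 0),
      varClausePerm_mem p S _, ?_⟩
    intro a
    cases a with
    | inl x =>
      obtain ⟨α, y⟩ := x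
      rw [varClausePerm_apply_inl]
      by_cases h : α ∈ I <;> simp [varClauseConstraint, h] <;> first | exact Or.inl rfl | exact Or.inr rfl
    | inr x =>
      obtain ⟨C, y⟩ := x
      rw [varClausePerm_apply_inr]
      have hsum : ∑ β ∈ C.1, (if β ∈ I then (1 : ZMod p) else 0) = 1 := by
        rw [Finset.sum_boole, Finset.filter_mem_eq_inter, hI C.1 C.2]
        simp
      simp [varClauseConstraint, hsum]
      rfl
  · rintro ⟨g, hg, hconstr⟩
    obtain ⟨u, rfl⟩ : ∃ u, g = varClausePerm p S u := by
      clear hconstr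
      induction hg using Subgroup.closure_induction with
      | mem x hx => obtain ⟨α, rfl⟩ := hx; exact ⟨indicator p α, rfl⟩
      | one => exact ⟨0, (varClausePerm_zero p S).symm⟩
      | mul x y hx hy ihx ihy =>
        obtain ⟨u, rfl⟩ := ihx; obtain ⟨v, rfl⟩ := ihy
        exact ⟨u + v, varClausePerm_mul p S u v⟩
      | inv x hx ihx =>
        obtain ⟨u, rfl⟩ := ihx
        exact ⟨-u, varClausePerm_inv p S u⟩
    have hvar : ∀ α, u α = 0 ∨ u α = 1 := by
      intro α
      have h := hconstr (Sum.inl (α, 0))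
      rw [varClausePerm_apply_inl] at h
      simp only [varClauseConstraint, Set.mem_insert_iff, Set.mem_singleton_iff,
        zero_add] at h
      rcases h with h | h
      · exact Or.inl (congrArg Prod.snd (Sum.inl.inj h))
      · exact Or.inr (congrArg Prod.snd (Sum.inl.inj h))
    have hcl : ∀ C : {C // C ∈ S}, ∑ β ∈ C.1, u β = 1 := by
      intro C
      have h := hconstr (Sum.inr (C, 0))
      rw [varClausePerm_apply_inr] at h
      simp only [varClauseConstraint, Set.mem_singleton_iff, zero_add] at h
      exact congrArg Prod.snd (Sum.inr.inj h)
    refine ⟨Finset.univ.filter (fun α => u α = 1), ?_⟩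
    intro C hC
    have hfe : C ∩ Finset.univ.filter (fun α => u α = 1)
        = C.filter (fun α => u α = 1) := by
      ext β; simp [Finset.mem_filter, and_comm]
    rw [hfe]
    have h1 : (((C.filter fun α => u α = 1).card : ℕ) : ZMod p) = 1 := by
      have hs : ∑ β ∈ C, u β = ∑ β ∈ C, (if u β = 1 then (1 : ZMod p) else 0) := by
        refine Finset.sum_congr rfl fun β _ => ?_
        rcases hvar β with h | h <;> simp [h]
      rw [← Finset.sum_boole, ← hs, hcl ⟨C, hC⟩]
    have hle : (C.filter fun α => u α = 1).card ≤ p :=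
      le_trans (Finset.card_le_card (Finset.filter_subset _ _)) (hcard C hC)
    rcases lt_or_eq_of_le hle with hlt | heq
    · have := congrArg ZMod.val h1
      rwa [ZMod.val_cast_of_lt hlt, ZMod.val_one] at this
    · exfalso
      rw [heq, ZMod.natCast_self] at h1
      exact zero_ne_one h1
end
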